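/- Let r = 13 and let S = {1, ζ, ζ³, ζ⁹} where ζ = e^{2πi/13}. Then the exterior square of S, i.e., the multiset of pairwise products {s·t : s, t ∈ S, s ≠ t chosen as unordered pairs}, equals the set X₁₃ = {e^{2πi n²/13} : 0 < n < 13/2} = {ζ, ζ⁴, ζ⁹, ζ³, ζ¹², ζ¹⁰}, with each element occurring exactly once. Moreover, S and its complex conjugate are the only 4-element sets of 13-th roots of unity (up to this pair) whose exterior square is X₁₃. -/

import Mathlib

open Complex

private lemma aux_key {α : Type} [AddCommMonoid α] (s : Finset α) (n : ℕ) :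
    (Finset.powersetCard n s).val.map (fun t => t.sum id)
      = (s.1.powersetCard n).map Multiset.sum := by
  rcases s with ⟨m, hm⟩
  show Multiset.map _ (Multiset.pmap _ _ _) = _
  rw [Multiset.map_pmap]
  rw [show (fun (a : Multiset α) (h : a.Nodup) => Finset.sum ⟨a, h⟩ id) = (fun a _ => a.sum) by
    funext a h; simp [Finset.sum]]
  rw [Multiset.pmap_eq_map]

private lemma aux_pc2 {α : Type} [DecidableEq α] [AddCommMonoid α] {a b c d : α}
    (ha : a ∉ ({b,c,d}:Finset α)) (hb : b ∉ ({c,d}:Finset α)) (hc : c ∉ ({d}:Finset α)) :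
    (Finset.powersetCard 2 ({a,b,c,d}:Finset α)).val.map (fun t => t.sum id)
      = ({a+b,a+c,a+d,b+c,b+d,c+d} : Multiset α) := by
  rw [aux_key]
  have h1 : ({d}:Finset α).val = d ::ₘ 0 := rfl
  have h2 : ({c,d}:Finset α).val = c ::ₘ d ::ₘ 0 := by
    rw [show ({c,d}:Finset α) = insert c {d} from rfl, Finset.insert_val,
      Multiset.ndinsert_of_notMem (by simpa using hc), h1]
  have h3 : ({b,c,d}:Finset α).val = b ::ₘ c ::ₘ d ::ₘ 0 := by
    rw [show ({b,c,d}:Finset α) = insert b {c,d} from rfl, Finset.insert_val,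
      Multiset.ndinsert_of_notMem (by simpa [Finset.mem_def, h2] using hb), h2]
  have h4 : ({a,b,c,d}:Finset α).val = a ::ₘ b ::ₘ c ::ₘ d ::ₘ 0 := by
    rw [show ({a,b,c,d}:Finset α) = insert a {b,c,d} from rfl, Finset.insert_val,
      Multiset.ndinsert_of_notMem (by simpa [Finset.mem_def, h3] using ha), h3]
  rw [h4]
  simp [Multiset.powersetCard_cons, Multiset.sum_cons, ← Multiset.cons_zero,
    Multiset.powersetCard_zero_left, Multiset.powersetCard_zero_right]

set_option maxRecDepth 40000 in
set_option maxHeartbeats 2000000 in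
private lemma aux_D : ∀ a b c d : ZMod 13,
    ({a+b,a+c,a+d,b+c,b+d,c+d} : Multiset (ZMod 13)) = ({1,3,4,9,10,12} : Multiset (ZMod 13)) →
    ({a,b,c,d}:Finset (ZMod 13)) = ({0,1,3,9} : Finset (ZMod 13)) ∨
    ({a,b,c,d}:Finset (ZMod 13)) = ({0,12,10,4} : Finset (ZMod 13)) := by
  decide

set_option maxRecDepth 4000 in
private lemma aux_small :
    (Finset.powersetCard 2 ({0,1,3,9} : Finset (ZMod 13))).val.map (fun t => t.sum id)
      = ({1,3,4,9,10,12} : Multiset (ZMod 13)) := by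
  decide

/-- For `ζ = e^{2πi/13}` and `S = {1, ζ, ζ³, ζ⁹}`, the multiset of pairwise products
of distinct elements of `S` is exactly `X₁₃ = {ζ, ζ³, ζ⁴, ζ⁹, ζ¹⁰, ζ¹²}` (each element
once); moreover `S` and its complex conjugate `{1, ζ¹², ζ¹⁰, ζ⁴}` are the only
4-element sets of 13-th roots of unity with this property. -/
theorem stmt_19 (ζ : ℂ) (hζ : ζ = Complex.exp (2 * Real.pi * Complex.I / 13)) :
    ((Finset.powersetCard 2 ({1, ζ, ζ ^ 3, ζ ^ 9} : Finset ℂ)).val.map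
        (fun t => t.prod id))
      = ({ζ, ζ ^ 3, ζ ^ 4, ζ ^ 9, ζ ^ 10, ζ ^ 12} : Multiset ℂ) ∧
    ∀ T : Finset ℂ, T.card = 4 → (∀ z ∈ T, z ^ 13 = 1) →
      ((Finset.powersetCard 2 T).val.map (fun t => t.prod id))
        = ({ζ, ζ ^ 3, ζ ^ 4, ζ ^ 9, ζ ^ 10, ζ ^ 12} : Multiset ℂ) →
      T = ({1, ζ, ζ ^ 3, ζ ^ 9} : Finset ℂ) ∨
      T = ({1, ζ ^ 12, ζ ^ 10, ζ ^ 4} : Finset ℂ) := by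
  classical
  have hprim : IsPrimitiveRoot ζ 13 := by
    rw [hζ]; exact Complex.isPrimitiveRoot_exp 13 (by norm_num)
  set f : ZMod 13 → ℂ := fun k => ζ ^ k.val with hfdef
  have hfinj : Function.Injective f := by
    intro a b h
    exact ZMod.val_injective _ (hprim.pow_inj (ZMod.val_lt a) (ZMod.val_lt b) h)
  have hmod : ∀ m : ℕ, ζ ^ m = ζ ^ (m % 13) := by
    intro m
    conv_lhs => rw [← Nat.div_add_mod m 13]
    rw [pow_add, pow_mul, hprim.pow_eq_one, one_pow, one_mul]
  have hadd : ∀ a b : ZMod 13, f (a + b) = f a * f b := by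
    intro a b
    show ζ ^ _ = ζ ^ _ * ζ ^ _
    rw [ZMod.val_add, ← hmod, pow_add]
  have hfval : ∀ n : ℕ, n < 13 → f ((n : ZMod 13)) = ζ ^ n := by
    intro n h
    show ζ ^ _ = _
    rw [ZMod.val_cast_of_lt h]
  have e0 : f 0 = 1 := by simpa using hfval 0 (by norm_num)
  have e1 : f 1 = ζ := by simpa using hfval 1 (by norm_num)
  have e3 : f 3 = ζ ^ 3 := by simpa using hfval 3 (by norm_num)
  have e4 : f 4 = ζ ^ 4 := by simpa using hfval 4 (by norm_num)
  have e9 : f 9 = ζ ^ 9 := by simpa using hfval 9 (by norm_num)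
  have e10 : f 10 = ζ ^ 10 := by simpa using hfval 10 (by norm_num)
  have e12 : f 12 = ζ ^ 12 := by simpa using hfval 12 (by norm_num)
  have hsum : ∀ t : Finset (ZMod 13), (∏ k ∈ t, f k) = f (t.sum id) := by
    intro t
    induction t using Finset.cons_induction with
    | empty => simpa using e0.symm
    | cons a s has ih => rw [Finset.prod_cons, Finset.sum_cons, ih, ← hadd]; rfl
  have transfer : ∀ S : Finset (ZMod 13),
      ((Finset.powersetCard 2 (S.image f)).val.map (fun t => t.prod id))
        = ((Finset.powersetCard 2 S).val.map (fun t => t.sum id)).map f := by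
    intro S
    rw [show S.image f = S.map ⟨f, hfinj⟩ from (Finset.map_eq_image ⟨f, hfinj⟩ S).symm]
    rw [Finset.powersetCard_map, Finset.map_val, Multiset.map_map, Multiset.map_map]
    apply Multiset.map_congr rfl
    intro t ht
    show ((Finset.mapEmbedding ⟨f, hfinj⟩).toEmbedding t).prod id = f (t.sum id)
    rw [show (Finset.mapEmbedding ⟨f, hfinj⟩).toEmbedding t = t.map ⟨f, hfinj⟩ from rfl,
      Finset.prod_map]
    simpa using hsum t
  have hmapX : (({1,3,4,9,10,12} : Multiset (ZMod 13)).map f)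
      = ({ζ, ζ ^ 3, ζ ^ 4, ζ ^ 9, ζ ^ 10, ζ ^ 12} : Multiset ℂ) := by
    simp only [Multiset.insert_eq_cons, Multiset.map_cons, Multiset.map_singleton,
      e1, e3, e4, e9, e10, e12]
  have himg1 : (({0,1,3,9} : Finset (ZMod 13)).image f) = ({1, ζ, ζ ^ 3, ζ ^ 9} : Finset ℂ) := by
    simp only [Finset.image_insert, Finset.image_singleton, e0, e1, e3, e9]
  have himg2 : (({0,12,10,4} : Finset (ZMod 13)).image f)
      = ({1, ζ ^ 12, ζ ^ 10, ζ ^ 4} : Finset ℂ) := by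
    simp only [Finset.image_insert, Finset.image_singleton, e0, e12, e10, e4]
  constructor
  · rw [← himg1, transfer, aux_small, hmapX]
  · intro T hcard hroots heq
    have hTrange : ∀ z ∈ T, z ∈ Set.range f := by
      intro z hz
      obtain ⟨i, hi, hik⟩ := hprim.eq_pow_of_pow_eq_one (hroots z hz)
      exact ⟨(i : ZMod 13), by rw [hfval i hi, hik]⟩
    set S : Finset (ZMod 13) := T.preimage f (Set.injOn_of_injective hfinj) with hSdef
    have him : S.image f = T := by
      rw [hSdef, Finset.image_preimage, Finset.filter_eq_self]
      exact hTrange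
    have hScard : S.card = 4 := by
      have h := Finset.card_image_of_injective S hfinj
      rw [him, hcard] at h
      omega
    have hsums : ((Finset.powersetCard 2 S).val.map (fun t => t.sum id))
        = ({1,3,4,9,10,12} : Multiset (ZMod 13)) := by
      apply Multiset.map_injective hfinj
      rw [← transfer S, him, heq, hmapX]
    obtain ⟨a, s3, has, hins, hs3⟩ := Finset.card_eq_succ.mp hScard
    obtain ⟨b, c, d, hbc, hbd, hcd, hs3e⟩ := Finset.card_eq_three.mp hs3
    rw [hs3e] at has hins
    have hSe : S = ({a, b, c, d} : Finset (ZMod 13)) := hins.symm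
    have hb' : b ∉ ({c, d} : Finset (ZMod 13)) := by simp [hbc, hbd]
    have hc' : c ∉ ({d} : Finset (ZMod 13)) := by simp [hcd]
    have hmulti : ({a+b,a+c,a+d,b+c,b+d,c+d} : Multiset (ZMod 13))
        = ({1,3,4,9,10,12} : Multiset (ZMod 13)) := by
      rw [← aux_pc2 has hb' hc', ← hSe, hsums]
    rcases aux_D a b c d hmulti with h | h
    · left; rw [← him, hSe, h, himg1]
    · right; rw [← him, hSe, h, himg2]
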